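/- Let k be a field, r_0, r_1, r_2 ∈ k[t], and P_n as defined by P_0 = 1, P_1 = r_1, P_{n+1} = r_1 P_n − r_0 r_2 P_{n−1}. Then for every n ≥ 1, in k[t,x,y] one has x y^{n−1} P_{n−1} ∈ (x^n, y^n, r_0 x^2 + r_1 x y + r_2 y^2). -/
import Mathlib


open MvPolynomial

lemma stmt8_aux {R : Type*} [CommRing R] (R0 R1 R2 x y : R) (p : ℕ → R)
    (h0 : p 0 = 1) (h1 : p 1 = R1)
    (hrec : ∀ n : ℕ, 1 ≤ n → p (n + 1) = R1 * p n - R0 * R2 * p (n - 1)) :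
    ∀ m : ℕ, ∃ B : R, x * y ^ (m + 1) * p (m + 1) =
      (-R0) ^ (m + 1) * x ^ (m + 2) - R2 * p m * y ^ (m + 2)
        + (R0 * x ^ 2 + R1 * x * y + R2 * y ^ 2) * B := by
  intro m
  induction m with
  | zero => exact ⟨1, by rw [h0, h1]; ring⟩
  | succ m ih =>
      obtain ⟨B, h⟩ := ih
      refine ⟨y ^ (m + 1) * p (m + 1) - R0 * x * B, ?_⟩
      have hr := hrec (m + 1) (Nat.le_add_left 1 m)
      simp only [Nat.add_sub_cancel] at hr
      rw [hr]
      linear_combination (-(R0 * x)) * h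

/-- For arbitrary `r₀ r₁ r₂ ∈ k[t]` and `P_0 = 1`, `P_1 = r₁`,
`P_{n+1} = r₁ P_n - r₀ r₂ P_{n-1}`, for every `n ≥ 1` one has
`x y^{n-1} P_{n-1} ∈ (x^n, y^n, r₀ x^2 + r₁ x y + r₂ y^2)` in `k[t,x,y]`
(with `t = X 0`, `x = X 1`, `y = X 2`). -/
theorem stmt8 {k : Type*} [Field k] (r₀ r₁ r₂ : Polynomial k) (P : ℕ → Polynomial k)
    (hP0 : P 0 = 1) (hP1 : P 1 = r₁)
    (hPrec : ∀ n : ℕ, 1 ≤ n → P (n + 1) = r₁ * P n - r₀ * r₂ * P (n - 1)) :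
    ∀ n : ℕ, 1 ≤ n →
      (X 1 : MvPolynomial (Fin 3) k) * (X 2) ^ (n - 1) *
          Polynomial.aeval (X 0 : MvPolynomial (Fin 3) k) (P (n - 1)) ∈
        Ideal.span {(X 1 : MvPolynomial (Fin 3) k) ^ n, (X 2) ^ n,
          Polynomial.aeval (X 0 : MvPolynomial (Fin 3) k) r₀ * (X 1) ^ 2
            + Polynomial.aeval (X 0 : MvPolynomial (Fin 3) k) r₁ * (X 1) * (X 2)
            + Polynomial.aeval (X 0 : MvPolynomial (Fin 3) k) r₂ * (X 2) ^ 2} := by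
  set a : Polynomial k →ₐ[k] MvPolynomial (Fin 3) k :=
    Polynomial.aeval (X 0 : MvPolynomial (Fin 3) k) with ha
  have h0 : a (P 0) = 1 := by rw [hP0, map_one]
  have h1 : a (P 1) = a r₁ := by rw [hP1]
  have hrec : ∀ n : ℕ, 1 ≤ n →
      a (P (n + 1)) = a r₁ * a (P n) - a r₀ * a r₂ * a (P (n - 1)) := by
    intro n hn
    rw [hPrec n hn, map_sub, map_mul, map_mul, map_mul]
  intro n hn
  match n, hn with
  | 1, _ =>
      simp only [Nat.sub_self, pow_zero, mul_one, hP0, map_one, pow_one]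
      exact Ideal.subset_span (Set.mem_insert _ _)
  | (m + 2), _ =>
      obtain ⟨B, h⟩ := stmt8_aux (a r₀) (a r₁) (a r₂) (X 1) (X 2)
        (fun n => a (P n)) h0 h1 hrec m
      show X 1 * X 2 ^ (m+1) * a (P (m+1)) ∈ _
      rw [h]
      refine Ideal.add_mem _ (Ideal.sub_mem _ ?_ ?_) ?_
      · exact Ideal.mul_mem_left _ _ (Ideal.subset_span (Set.mem_insert _ _))
      · exact Ideal.mul_mem_left _ _ (Ideal.subset_span
          (Set.mem_insert_of_mem _ (Set.mem_insert _ _)))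
      · refine Ideal.mul_mem_right _ _ (Ideal.subset_span ?_)
        exact Set.mem_insert_of_mem _ (Set.mem_insert_of_mem _ rfl)
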